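/- Let μ ∈ ℂ and define, for z in the cut plane ℂ ∖ (−∞,0] with z ≠ 1, the sequence G_{μ,0}(z) = z^{μ+3/2}/(z² − 1) (principal power) and G_{μ,s+1}(z) = (G_{μ,s}(z) + 4z² G_{μ,s}''(z))/(4(1 − z²)). Then for every s ≥ 0 there exists a polynomial P_s (depending on μ) such that G_{μ,s}(z) = z^{μ+3/2} P_s(z²)/(1 − z²)^{3s+1} for all z in the cut plane with z ≠ 1; in particular G_{μ,s}(z) = O(z^{μ+3/2}) as z → 0 in the cut plane, i.e. z^{−μ−3/2} G_{μ,s}(z) remains bounded as z → 0. -/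

import Mathlib

open Complex Polynomial Filter

/-- The coefficients `G_{μ,s}(z)`: `G_{μ,0}(z) = z^(μ+3/2)/(z²-1)` (principal power) and
`G_{μ,s+1}(z) = (G_{μ,s}(z) + 4z² G_{μ,s}''(z))/(4(1-z²))`. -/
noncomputable def Gmu (μ : ℂ) : ℕ → ℂ → ℂ
  | 0 => fun z => z ^ (μ + 3 / 2) / (z ^ 2 - 1)
  | s + 1 => fun z => (Gmu μ s z + 4 * z ^ 2 * deriv (deriv (Gmu μ s)) z) / (4 * (1 - z ^ 2))

lemma Gmu.sq_ne_one {z : ℂ} (hz : z ∈ Complex.slitPlane) (h1 : z ≠ 1) : 1 - z ^ 2 ≠ 0 := by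
  intro h
  have hf : (z - 1) * (z + 1) = 0 := by linear_combination -h
  rcases mul_eq_zero.1 hf with h' | h'
  · exact h1 (sub_eq_zero.mp h')
  · have hz1 : z = -1 := eq_neg_of_add_eq_zero_left h'
    subst hz1
    simp [Complex.mem_slitPlane_iff] at hz
    norm_num at hz

noncomputable def GmuN₁ (n : ℕ) (P : Polynomial ℂ) : Polynomial ℂ :=
  derivative P * (1 - X) + C (n : ℂ) * P

noncomputable def GmuN₂ (n : ℕ) (P : Polynomial ℂ) : Polynomial ℂ :=
  derivative (GmuN₁ n P) * (1 - X) + C ((n : ℂ) + 1) * GmuN₁ n P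

noncomputable def GmuStep (c : ℂ) (n : ℕ) (P : Polynomial ℂ) : Polynomial ℂ :=
  C (4⁻¹ : ℂ) * (C (1 + 4 * c * (c - 1)) * P * (1 - X) ^ 2
    + C (16 * c + 8) * X * GmuN₁ n P * (1 - X) + C 16 * X ^ 2 * GmuN₂ n P)

lemma GmuN₁_eval (n : ℕ) (P : Polynomial ℂ) (w : ℂ) :
    (GmuN₁ n P).eval w = (derivative P).eval w * (1 - w) + (n : ℂ) * P.eval w := by
  simp [GmuN₁]

lemma GmuN₂_eval (n : ℕ) (P : Polynomial ℂ) (w : ℂ) :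
    (GmuN₂ n P).eval w =
      ((derivative (derivative P)).eval w * (1 - w) + ((n : ℂ) - 1) * (derivative P).eval w)
        * (1 - w)
      + ((n : ℂ) + 1) * ((derivative P).eval w * (1 - w) + (n : ℂ) * P.eval w) := by
  simp only [GmuN₂, GmuN₁, derivative_mul, derivative_add, derivative_sub,
    derivative_one, derivative_X, derivative_C, eval_add, eval_mul, eval_sub, eval_one,
    eval_X, eval_C, eval_natCast, eval_zero, derivative_zero]
  ring

lemma GmuStep_eval (c : ℂ) (n : ℕ) (P : Polynomial ℂ) (w : ℂ) :
    (GmuStep c n P).eval w =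
      4⁻¹ * ((1 + 4 * c * (c - 1)) * P.eval w * (1 - w) ^ 2
        + (16 * c + 8) * w * (GmuN₁ n P).eval w * (1 - w)
        + 16 * w ^ 2 * (GmuN₂ n P).eval w) := by
  simp [GmuStep]

set_option maxHeartbeats 1000000 in
lemma Gmu_formula (μ : ℂ) (s : ℕ) :
    ∃ P : Polynomial ℂ, ∀ z ∈ Complex.slitPlane, z ≠ 1 →
      Gmu μ s z = z ^ (μ + 3 / 2) * P.eval (z ^ 2) / (1 - z ^ 2) ^ (3 * s + 1) := by
  set c : ℂ := μ + 3 / 2 with hc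
  induction s with
  | zero =>
    refine ⟨-1, fun z hz h1 => ?_⟩
    have h := Gmu.sq_ne_one hz h1
    have h' : z ^ 2 - 1 ≠ 0 := fun hh => h (by linear_combination -hh)
    show z ^ c / (z ^ 2 - 1) = z ^ c * (-1 : Polynomial ℂ).eval (z ^ 2) / (1 - z ^ 2) ^ (3 * 0 + 1)
    simp only [Polynomial.eval_neg, Polynomial.eval_one, Nat.mul_zero, Nat.zero_add, pow_one]
    field_simp
    ring
  | succ s ih =>
    obtain ⟨P, hP⟩ := ih
    set n : ℕ := 3 * s + 1 with hn
    -- the rational pieces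
    set A : ℂ → ℂ := fun w => P.eval (w ^ 2) / (1 - w ^ 2) ^ n with hA_def
    set A₁ : ℂ → ℂ := fun w => 2 * w * (GmuN₁ n P).eval (w ^ 2) / (1 - w ^ 2) ^ (n + 1)
      with hA₁_def
    set A₂ : ℂ → ℂ := fun w =>
        (2 * (GmuN₁ n P).eval (w ^ 2) * (1 - w ^ 2) + 4 * w ^ 2 * (GmuN₂ n P).eval (w ^ 2))
          / (1 - w ^ 2) ^ (n + 2) with hA₂_def
    have h2 : ∀ w : ℂ, HasDerivAt (fun w : ℂ => w ^ 2) (2 * w) w := fun w => by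
      simpa using hasDerivAt_pow 2 w
    have hA : ∀ w : ℂ, 1 - w ^ 2 ≠ 0 → HasDerivAt A (A₁ w) w := by
      intro w hw
      have hnum : HasDerivAt (fun w : ℂ => P.eval (w ^ 2))
          ((derivative P).eval (w ^ 2) * (2 * w)) w := by
        exact (P.hasDerivAt (w ^ 2)).comp w (h2 w)
      have hb : HasDerivAt (fun w : ℂ => 1 - w ^ 2) (0 - 2 * w) w :=
        (hasDerivAt_const w (1 : ℂ)).sub (h2 w)
      have hd : HasDerivAt (fun w : ℂ => (1 - w ^ 2) ^ n)
          ((n : ℂ) * (1 - w ^ 2) ^ (3 * s) * (0 - 2 * w)) w := by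
        simpa [hn] using hb.fun_pow n
      have hden : (1 - w ^ 2) ^ n ≠ 0 := pow_ne_zero _ hw
      have := hnum.fun_div hd hden
      convert this using 1
      case e'_4 => exact rfl
      case e'_5 => exact rfl
      show 2 * w * (GmuN₁ n P).eval (w ^ 2) / (1 - w ^ 2) ^ (n + 1) = _
      rw [GmuN₁_eval]
      rw [hn]
      field_simp
      ring
    have hA₁ : ∀ w : ℂ, 1 - w ^ 2 ≠ 0 → HasDerivAt A₁ (A₂ w) w := by
      intro w hw
      have hnum : HasDerivAt (fun w : ℂ => 2 * w * (GmuN₁ n P).eval (w ^ 2))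
          (2 * (GmuN₁ n P).eval (w ^ 2)
            + 2 * w * ((derivative (GmuN₁ n P)).eval (w ^ 2) * (2 * w))) w := by
        have hg : HasDerivAt (fun w : ℂ => (GmuN₁ n P).eval (w ^ 2))
            ((derivative (GmuN₁ n P)).eval (w ^ 2) * (2 * w)) w := by
          exact ((GmuN₁ n P).hasDerivAt (w ^ 2)).comp w (h2 w)
        have hl : HasDerivAt (fun w : ℂ => 2 * w) 2 w := by
          simpa using (hasDerivAt_id w).const_mul (2 : ℂ)
        simpa [add_comm] using hl.fun_mul hg
      have hb : HasDerivAt (fun w : ℂ => 1 - w ^ 2) (0 - 2 * w) w :=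
        (hasDerivAt_const w (1 : ℂ)).sub (h2 w)
      have hd : HasDerivAt (fun w : ℂ => (1 - w ^ 2) ^ (n + 1))
          (((n : ℂ) + 1) * (1 - w ^ 2) ^ n * (0 - 2 * w)) w := by
        simpa using hb.fun_pow (n + 1)
      have hden : (1 - w ^ 2) ^ (n + 1) ≠ 0 := pow_ne_zero _ hw
      have := hnum.fun_div hd hden
      convert this using 1
      case e'_4 => exact rfl
      case e'_5 => exact rfl
      show (2 * (GmuN₁ n P).eval (w ^ 2) * (1 - w ^ 2)
          + 4 * w ^ 2 * (GmuN₂ n P).eval (w ^ 2)) / (1 - w ^ 2) ^ (n + 2) = _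
      have hN₂ : (GmuN₂ n P).eval (w ^ 2) =
          (derivative (GmuN₁ n P)).eval (w ^ 2) * (1 - w ^ 2)
            + ((n : ℂ) + 1) * (GmuN₁ n P).eval (w ^ 2) := by
        simp [GmuN₂]
      rw [hN₂]
      field_simp
      ring
    refine ⟨GmuStep c n P, fun z hz h1 => ?_⟩
    have hU : IsOpen {w : ℂ | w ∈ Complex.slitPlane ∧ w ≠ 1} :=
      Complex.isOpen_slitPlane.inter isOpen_compl_singleton
    have hzU : z ∈ {w : ℂ | w ∈ Complex.slitPlane ∧ w ≠ 1} := ⟨hz, h1⟩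
    have hz0 : z ≠ 0 := Complex.slitPlane_ne_zero hz
    have hw : 1 - z ^ 2 ≠ 0 := Gmu.sq_ne_one hz h1
    -- G = z^c * A on U
    have hGmu_eq : ∀ w ∈ Complex.slitPlane, w ≠ 1 →
        Gmu μ s w = w ^ c * A w := by
      intro w hw1 hw2
      rw [hP w hw1 hw2, hA_def]
      rw [mul_div_assoc]
    set D₀ : ℂ → ℂ := fun w => w ^ c * A w with hD₀_def
    set D₁ : ℂ → ℂ := fun w => c * w ^ (c - 1) * A w + w ^ c * A₁ w with hD₁_def
    have hD₀ : ∀ w ∈ Complex.slitPlane, w ≠ 1 → HasDerivAt D₀ (D₁ w) w := by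
      intro w hw1 hw2
      exact ((Complex.hasStrictDerivAt_cpow_const hw1).hasDerivAt).mul
        (hA w (Gmu.sq_ne_one hw1 hw2))
    have hderiv1 : ∀ w ∈ Complex.slitPlane, w ≠ 1 → deriv (Gmu μ s) w = D₁ w := by
      intro w hw1 hw2
      have hev : Gmu μ s =ᶠ[nhds w] D₀ :=
        Filter.eventually_of_mem (hU.mem_nhds ⟨hw1, hw2⟩)
          (fun x hx => hGmu_eq x hx.1 hx.2)
      rw [hev.deriv_eq]
      exact (hD₀ w hw1 hw2).deriv
    have hev1 : deriv (Gmu μ s) =ᶠ[nhds z] D₁ :=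
      Filter.eventually_of_mem (hU.mem_nhds hzU) (fun x hx => hderiv1 x hx.1 hx.2)
    have hc12 : c - 1 - 1 = c - 2 := by ring
    have hD₁z : HasDerivAt D₁
        (c * (c - 1) * z ^ (c - 2) * A z + 2 * c * z ^ (c - 1) * A₁ z + z ^ c * A₂ z) z := by
      have ht1 : HasDerivAt (fun w : ℂ => c * w ^ (c - 1) * A w)
          ((c * ((c - 1) * z ^ (c - 2))) * A z + c * z ^ (c - 1) * A₁ z) z := by
        have hp : HasDerivAt (fun w : ℂ => c * w ^ (c - 1))
            (c * ((c - 1) * z ^ (c - 2))) z := by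
          have := (Complex.hasStrictDerivAt_cpow_const (c := c - 1) hz).hasDerivAt.const_mul c
          rwa [hc12] at this
        simpa using hp.fun_mul (hA z hw)
      have ht2 : HasDerivAt (fun w : ℂ => w ^ c * A₁ w)
          (c * z ^ (c - 1) * A₁ z + z ^ c * A₂ z) z :=
        ((Complex.hasStrictDerivAt_cpow_const hz).hasDerivAt).mul (hA₁ z hw)
      have := ht1.fun_add ht2
      exact this.congr_deriv (by ring)
    have hsecond : deriv (deriv (Gmu μ s)) z =
        c * (c - 1) * z ^ (c - 2) * A z + 2 * c * z ^ (c - 1) * A₁ z + z ^ c * A₂ z := by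
      rw [hev1.deriv_eq]
      exact hD₁z.deriv
    -- cpow identities
    have e1 : z ^ (c - 1) = z ^ c / z := by
      rw [Complex.cpow_sub _ _ hz0, Complex.cpow_one]
    have e2 : z ^ (c - 2) = z ^ c / z ^ 2 := by
      rw [Complex.cpow_sub _ _ hz0, show (2 : ℂ) = ((2 : ℕ) : ℂ) by norm_num,
        Complex.cpow_natCast]
    show (Gmu μ s z + 4 * z ^ 2 * deriv (deriv (Gmu μ s)) z) / (4 * (1 - z ^ 2)) = _
    rw [hGmu_eq z hz h1, hsecond, e1, e2]
    have hexp : 3 * (s + 1) + 1 = n + 3 := by omega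
    rw [hexp]
    have hnum_eq : z ^ c * A z + 4 * z ^ 2 *
          (c * (c - 1) * (z ^ c / z ^ 2) * A z + 2 * c * (z ^ c / z) * A₁ z + z ^ c * A₂ z)
        = z ^ c * ((1 + 4 * c * (c - 1)) * A z + 8 * c * z * A₁ z + 4 * z ^ 2 * A₂ z) := by
      field_simp
      ring
    rw [hnum_eq, mul_div_assoc, mul_div_assoc]
    congr 1
    simp only [hA_def, hA₁_def, hA₂_def]
    rw [GmuStep_eval, GmuN₁_eval, GmuN₂_eval]
    rw [show (1 - z ^ 2 : ℂ) ^ (n + 1) = (1 - z ^ 2) ^ n * (1 - z ^ 2) ^ 1 from pow_add _ _ _,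
      show (1 - z ^ 2 : ℂ) ^ (n + 2) = (1 - z ^ 2) ^ n * (1 - z ^ 2) ^ 2 from pow_add _ _ _,
      show (1 - z ^ 2 : ℂ) ^ (n + 3) = (1 - z ^ 2) ^ n * (1 - z ^ 2) ^ 3 from pow_add _ _ _]
    set u : ℂ := 1 - z ^ 2 with hu
    set K : ℂ := u ^ n with hK
    have hKne : K ≠ 0 := pow_ne_zero _ hw
    clear_value K
    clear_value u
    have D1 : (4 : ℂ) * u ≠ 0 := mul_ne_zero (by norm_num) hw
    have D2 : K * u ^ 3 ≠ 0 := mul_ne_zero hKne (pow_ne_zero _ hw)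
    rw [div_eq_div_iff D1 D2]
    field_simp [hw, hKne]
    ring

/-- For every `s` there is a polynomial `P_s` (depending on `μ`) with
`G_{μ,s}(z) = z^(μ+3/2) P_s(z²)/(1-z²)^(3s+1)` on the cut plane minus `{1}`; in particular
`z^(-μ-3/2) G_{μ,s}(z)` remains bounded as `z → 0` in the cut plane. -/
theorem Gmu_structure (μ : ℂ) (s : ℕ) :
    (∃ P : Polynomial ℂ, ∀ z ∈ Complex.slitPlane, z ≠ 1 →
        Gmu μ s z = z ^ (μ + 3 / 2) * P.eval (z ^ 2) / (1 - z ^ 2) ^ (3 * s + 1)) ∧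
    (∃ C r : ℝ, 0 < C ∧ 0 < r ∧ ∀ z ∈ Complex.slitPlane, ‖z‖ ≤ r →
        ‖z ^ (-μ - 3 / 2) * Gmu μ s z‖ ≤ C) := by
  obtain ⟨P, hP⟩ := Gmu_formula μ s
  refine ⟨⟨P, hP⟩, ?_⟩
  -- bound on the polynomial on the closed unit ball
  obtain ⟨B, hB⟩ := (isCompact_closedBall (0 : ℂ) 1).exists_bound_of_continuousOn
    (Polynomial.continuous P).continuousOn
  have hB0 : 0 ≤ B := le_trans (norm_nonneg _) (hB 0 (by simp))
  set n : ℕ := 3 * s + 1 with hn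
  refine ⟨(B + 1) * (4 / 3 : ℝ) ^ n, 1 / 2, by positivity, by norm_num, ?_⟩
  intro z hz hzr
  have hz0 : z ≠ 0 := Complex.slitPlane_ne_zero hz
  have h1 : z ≠ 1 := by
    intro h; rw [h] at hzr; simp at hzr; norm_num at hzr
  have hw : 1 - z ^ 2 ≠ 0 := Gmu.sq_ne_one hz h1
  rw [hP z hz h1]
  have habs : ‖z‖ ≤ 1 / 2 := hzr
  have hsq : ‖z ^ 2‖ ≤ 1 / 4 := by
    rw [norm_pow]
    nlinarith [norm_nonneg z]
  have hden : (3 / 4 : ℝ) ≤ ‖1 - z ^ 2‖ := by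
    have := norm_sub_norm_le (1 : ℂ) (z ^ 2)
    simp only [norm_one] at this
    linarith
  have hkey : z ^ (-μ - 3 / 2) * (z ^ (μ + 3 / 2) * P.eval (z ^ 2) / (1 - z ^ 2) ^ n)
      = P.eval (z ^ 2) / (1 - z ^ 2) ^ n := by
    have hzz : z ^ (-μ - 3 / 2) * z ^ (μ + 3 / 2) = 1 := by
      rw [← Complex.cpow_add _ _ hz0]
      norm_num
    calc z ^ (-μ - 3 / 2) * (z ^ (μ + 3 / 2) * P.eval (z ^ 2) / (1 - z ^ 2) ^ n)
        = (z ^ (-μ - 3 / 2) * z ^ (μ + 3 / 2)) * P.eval (z ^ 2) / (1 - z ^ 2) ^ n := by ring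
      _ = P.eval (z ^ 2) / (1 - z ^ 2) ^ n := by rw [hzz]; ring
  rw [hkey, norm_div, norm_pow]
  have hnum : ‖P.eval (z ^ 2)‖ ≤ B := by
    have hmem : z ^ 2 ∈ Metric.closedBall (0 : ℂ) 1 := by
      rw [Metric.mem_closedBall, dist_zero_right]
      linarith
    simpa using hB (z ^ 2) hmem
  have hdpos : (0 : ℝ) < (3 / 4 : ℝ) ^ n := by positivity
  have hdle : (3 / 4 : ℝ) ^ n ≤ ‖1 - z ^ 2‖ ^ n :=
    pow_le_pow_left₀ (by norm_num) hden n
  calc ‖P.eval (z ^ 2)‖ / ‖1 - z ^ 2‖ ^ n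
      ≤ B / (3 / 4 : ℝ) ^ n := div_le_div₀ hB0 hnum hdpos hdle
    _ = B * (4 / 3 : ℝ) ^ n := by
        rw [div_eq_mul_inv, ← inv_pow]; norm_num
    _ ≤ (B + 1) * (4 / 3 : ℝ) ^ n := by
        have : (0 : ℝ) ≤ (4 / 3 : ℝ) ^ n := by positivity
        nlinarith
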